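/- Trace functionals determine the Serre functor (k-linear case): let S₀ be a map from the objects of C to the objects of C and, for each object X, let τ_X : (X ⟶ S₀ X) →ₗ[k] k be a k-linear functional. Assume that for all objects X, Y the k-linear map (X ⟶ S₀ Y) ⟶ Module.Dual k (Y ⟶ X), f ↦ (g ↦ τ_Y(g ≫ f)), is bijective. Then there exists a unique k-linear functor S : C ⥤ C with S.obj = S₀ such that τ_X(f ≫ S.map g) = τ_Y(g ≫ f) for all objects X, Y and all g : Y ⟶ X, f : X ⟶ S₀ Y; moreover, setting ψ_{X,Y}(f)(g) := τ_Y(g ≫ f), the pair (S,ψ) is a right Serre k-functor on C. -/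
import Mathlib


open CategoryTheory

universe w v u

/-- Trace functionals determine the Serre functor (k-linear case).  Given an object map `S₀`
and trace functionals `τ X : (X ⟶ S₀ X) →ₗ[k] k` such that the pairings
`f ↦ (g ↦ τ (g ≫ f))` are bijective, there is a unique way to extend `S₀` to a k-linear
functor `S` satisfying `τ (f ≫ S.map g) = τ (g ≫ f)`; with `ψ X Y f g := τ Y (g ≫ f)` the
pair `(S, ψ)` is a right Serre k-functor (`ψ` is natural in both variables). -/
theorem trace_determines_rightSerre_linear
    (k : Type w) [CommRing k] {C : Type u} [Category.{v} C] [Preadditive C]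
    [CategoryTheory.Linear k C]
    (S₀ : C → C) (τ : ∀ X : C, (X ⟶ S₀ X) →ₗ[k] k)
    (hbij : ∀ X Y : C, Function.Bijective
      (fun f : X ⟶ S₀ Y =>
        ((τ Y).comp (Linear.rightComp k Y f) : Module.Dual k (Y ⟶ X)))) :
    ∃ Smap : ∀ ⦃Y X : C⦄, (Y ⟶ X) → (S₀ Y ⟶ S₀ X),
      ((∀ Y : C, Smap (𝟙 Y) = 𝟙 (S₀ Y)) ∧
        (∀ (X Y Z : C) (g : X ⟶ Y) (h : Y ⟶ Z), Smap (g ≫ h) = Smap g ≫ Smap h) ∧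
        (∀ (X Y : C) (g g' : X ⟶ Y), Smap (g + g') = Smap g + Smap g') ∧
        (∀ (X Y : C) (r : k) (g : X ⟶ Y), Smap (r • g) = r • Smap g) ∧
        (∀ (X Y : C) (g : Y ⟶ X) (f : X ⟶ S₀ Y), τ X (f ≫ Smap g) = τ Y (g ≫ f))) ∧
      (∀ Smap' : ∀ ⦃Y X : C⦄, (Y ⟶ X) → (S₀ Y ⟶ S₀ X),
        ((∀ Y : C, Smap' (𝟙 Y) = 𝟙 (S₀ Y)) ∧
          (∀ (X Y Z : C) (g : X ⟶ Y) (h : Y ⟶ Z), Smap' (g ≫ h) = Smap' g ≫ Smap' h) ∧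
          (∀ (X Y : C) (g g' : X ⟶ Y), Smap' (g + g') = Smap' g + Smap' g') ∧
          (∀ (X Y : C) (r : k) (g : X ⟶ Y), Smap' (r • g) = r • Smap' g) ∧
          (∀ (X Y : C) (g : Y ⟶ X) (f : X ⟶ S₀ Y), τ X (f ≫ Smap' g) = τ Y (g ≫ f))) →
        Smap' = Smap) ∧
      -- with `ψ X Y f g := τ Y (g ≫ f)`, the pair `(S, ψ)` is a right Serre k-functor:
      -- `ψ` is natural in the first variable ...
      ((∀ (X Z Y : C) (x : Z ⟶ X) (f : X ⟶ S₀ Y) (z : Y ⟶ Z),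
          τ Y (z ≫ (x ≫ f)) = τ Y ((z ≫ x) ≫ f)) ∧
        -- ... and in the second variable
        (∀ (X Y Z : C) (y : Y ⟶ Z) (f : X ⟶ S₀ Y) (h : Z ⟶ X),
          τ Z (h ≫ (f ≫ Smap y)) = τ Y ((y ≫ h) ≫ f))) := by

  classical
  have key : ∀ {Y X : C} (a b : S₀ Y ⟶ S₀ X),
      (∀ h : X ⟶ S₀ Y, τ X (h ≫ a) = τ X (h ≫ b)) → a = b := by
    intro Y X a b hab
    apply (hbij (S₀ Y) X).1
    ext h
    simpa [Linear.rightComp] using hab h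
  let Smap : ∀ ⦃Y X : C⦄, (Y ⟶ X) → (S₀ Y ⟶ S₀ X) := fun Y X g =>
    Function.surjInv (hbij (S₀ Y) X).2 ((τ Y).comp (Linear.leftComp k (S₀ Y) g))
  have spec : ∀ {Y X : C} (g : Y ⟶ X) (h : X ⟶ S₀ Y),
      τ X (h ≫ Smap g) = τ Y (g ≫ h) := by
    intro Y X g h
    have := Function.surjInv_eq (hbij (S₀ Y) X).2 ((τ Y).comp (Linear.leftComp k (S₀ Y) g))
    have := LinearMap.congr_fun this h
    simpa [Linear.rightComp, Linear.leftComp, Smap] using this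
  refine ⟨Smap, ⟨?_, ?_, ?_, ?_, fun X Y g f => spec g f⟩, ?_, ?_, ?_⟩
  · intro Y
    apply key
    intro h
    rw [spec]
    simp
  · intro X Y Z g h
    apply key
    intro f
    rw [spec, Category.assoc g h f, ← Category.assoc f, spec h, ← Category.assoc h f (Smap g), spec g, ← Category.assoc]
  · intro X Y g g'
    apply key
    intro h
    rw [spec]
    simp only [Preadditive.comp_add, Preadditive.add_comp, map_add, spec]
  · intro X Y r g
    apply key
    intro h
    rw [spec]
    simp only [Linear.comp_smul, Linear.smul_comp, map_smul, spec]
  · intro Smap' ⟨_, _, _, _, h5⟩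
    funext Y X g
    apply key
    intro h
    rw [h5, spec]
  · intro X Z Y x f z
    rw [Category.assoc]
  · intro X Y Z y f h
    rw [← Category.assoc h f, spec y, Category.assoc]
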